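/- For any strings u and T with u a substring of T, the set of strings v such that EndPos(v,T) = EndPos(u,T) contains a unique longest element, and every element of this equivalence class is a suffix of that longest element. -/

import Mathlib

/-- 1-indexed ending positions of occurrences of `u` in `T`:
`i ∈ EndPos u T` iff `T[i-|u|+1..i] = u`. -/
def EndPos {α : Type*} (u T : List α) : Set ℕ :=
  {i | u.length ≤ i ∧ i ≤ T.length ∧ u <:+ T.take i}

/-- 0-indexed beginning positions of occurrences of `u` in `T`. -/
def BegPos {α : Type*} (u T : List α) : Set ℕ :=
  {i | i + u.length ≤ T.length ∧ u <+: T.drop i}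

/-- `u` is left-maximal in `T`: `u` is a prefix of `T`, or two distinct
characters immediately precede occurrences of `u` in `T`. -/
def LeftMaximal {α : Type*} (u T : List α) : Prop :=
  u <+: T ∨ ∃ c d : α, c ≠ d ∧ (c :: u) <:+: T ∧ (d :: u) <:+: T

/-- `u` is right-maximal in `T`: `u` is a suffix of `T`, or two distinct
characters immediately follow occurrences of `u` in `T`. -/
def RightMaximal {α : Type*} (u T : List α) : Prop :=
  u <:+ T ∨ ∃ c d : α, c ≠ d ∧ (u ++ [c]) <:+: T ∧ (u ++ [d]) <:+: T

/-- `u` is maximal in `T` iff it is both left-maximal and right-maximal. -/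
def MaximalSubstr {α : Type*} (u T : List α) : Prop :=
  LeftMaximal u T ∧ RightMaximal u T

/-- For any strings `u`, `T` with `u` a substring of `T`, the
left-equivalence class of `u` (substrings of `T` with the same end-position
set) contains a unique longest element, and every member of the class is a
suffix of that longest element. -/
theorem stmt0 {α : Type*} (u T : List α) (hu : u <:+: T) :
    ∃! w : List α, (w <:+: T ∧ EndPos w T = EndPos u T) ∧
      ∀ v : List α, v <:+: T → EndPos v T = EndPos u T → v <:+ w := by
  classical
  obtain ⟨s, t, hT⟩ := hu
  set i₀ := s.length + u.length with hi0
  have htake : T.take i₀ = s ++ u := by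
    rw [← hT]
    rw [show s ++ u ++ t = (s ++ u) ++ t by simp, hi0, ← List.length_append]
    exact List.take_left
  have hi₀u : i₀ ∈ EndPos u T := by
    refine ⟨by omega, ?_, ?_⟩
    · rw [← hT]; simp [hi0]
    · rw [htake]; exact ⟨s, rfl⟩
  -- every class member is a suffix of T.take i₀
  have hsuf : ∀ v : List α, EndPos v T = EndPos u T → v <:+ T.take i₀ := by
    intro v hv
    have : i₀ ∈ EndPos v T := by rw [hv]; exact hi₀u
    exact this.2.2
  set S : Set ℕ := {n | ∃ v : List α, (v <:+: T ∧ EndPos v T = EndPos u T) ∧ v.length = n} with hS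
  have hne : S.Nonempty := ⟨u.length, u, ⟨⟨s, t, hT⟩, rfl⟩, rfl⟩
  have hbdd : BddAbove S := by
    refine ⟨T.length, fun n hn => ?_⟩
    obtain ⟨v, ⟨hv1, _⟩, rfl⟩ := hn
    exact hv1.length_le
  obtain ⟨w, ⟨hw1, hw2⟩, hwlen⟩ := Nat.sSup_mem hne hbdd
  have hmax : ∀ v : List α, v <:+: T → EndPos v T = EndPos u T → v <:+ w := by
    intro v hv1 hv2
    have hvw := List.suffix_or_suffix_of_suffix (hsuf v hv2) (hsuf w hw2)
    rcases hvw with h | h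
    · exact h
    · have hle : v.length ≤ sSup S := le_csSup hbdd ⟨v, ⟨hv1, hv2⟩, rfl⟩
      rw [← hwlen] at hle
      rw [h.eq_of_length (le_antisymm h.length_le hle)]
  refine ⟨w, ⟨⟨hw1, hw2⟩, hmax⟩, ?_⟩
  rintro w' ⟨⟨hw1', hw2'⟩, hmax'⟩
  have h1 : w' <:+ w := hmax w' hw1' hw2'
  have h2 : w <:+ w' := hmax' w hw1 hw2
  exact h1.eq_of_length (le_antisymm h1.length_le h2.length_le)
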